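/- Consider the curve η_p : ℝ → ℝ³ given by η_p(y) = 2(1, y, y²). Its image is contained in the affine plane Q = {(X,Y,Z) ∈ ℝ³ : X = 2}, its affine span equals Q, and the Euclidean distance from the origin to Q equals 2. In particular, Q differs from the plane {X + Z = 2}, and the distance 2 differs from the distance √2 from the origin to {X + Z = 2}. -/

import Mathlib

/-- The curvature parabola of the tangential projection of the surface with 2-jet
`(x, y, x², 2xy, y²)` along the tangent direction `(0,1)`. -/
noncomputable def etaP : ℝ → EuclideanSpace ℝ (Fin 3) := fun y =>
  WithLp.toLp 2 ![2, 2 * y, 2 * y ^ 2]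

/-- The affine plane `X = 2` in `ℝ³`. -/
def Qplane : Set (EuclideanSpace ℝ (Fin 3)) := {v | v 0 = 2}

/-- The affine plane `X + Z = 2` in `ℝ³`. -/
def Pplane : Set (EuclideanSpace ℝ (Fin 3)) := {v | v 0 + v 2 = 2}

/-- `Qplane` as an affine subspace. -/
noncomputable def Qsub : AffineSubspace ℝ (EuclideanSpace ℝ (Fin 3)) where
  carrier := Qplane
  smul_vsub_vadd_mem' := by
    intro c p1 p2 p3 h1 h2 h3
    simp only [Qplane, Set.mem_setOf_eq] at *
    show c • (p1 - p2) 0 + p3 0 = 2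
    simp [h1, h2, h3]

lemma etaP_mem (y : ℝ) : etaP y ∈ Qplane := by
  simp [etaP, Qplane]

/-- The image of `η_p(y) = 2(1, y, y²)` lies in the plane `X = 2`, its affine span is exactly
that plane, the distance from the origin to that plane is `2`; moreover `{X = 2}` differs
from `{X + Z = 2}` and `2 ≠ √2`. -/
theorem stmt3 :
    (∀ y : ℝ, etaP y ∈ Qplane) ∧
    ((affineSpan ℝ (Set.range etaP) : Set (EuclideanSpace ℝ (Fin 3))) = Qplane) ∧
    Metric.infDist 0 Qplane = 2 ∧
    Qplane ≠ Pplane ∧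
    (2 : ℝ) ≠ Real.sqrt 2 := by
  refine ⟨etaP_mem, ?_, ?_, ?_, ?_⟩
  · apply le_antisymm
    · have h : affineSpan ℝ (Set.range etaP) ≤ Qsub := by
        rw [affineSpan_le]
        rintro _ ⟨y, rfl⟩
        exact etaP_mem y
      exact h
    · intro v hv
      have h0 : etaP 0 ∈ affineSpan ℝ (Set.range etaP) := subset_affineSpan ℝ _ ⟨0, rfl⟩
      have h1 : etaP 1 ∈ affineSpan ℝ (Set.range etaP) := subset_affineSpan ℝ _ ⟨1, rfl⟩
      have h2 : etaP (-1) ∈ affineSpan ℝ (Set.range etaP) := subset_affineSpan ℝ _ ⟨-1, rfl⟩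
      have hx : ((v 1 + v 2) / 4) • (etaP 1 -ᵥ etaP 0) +ᵥ etaP 0 ∈
          affineSpan ℝ (Set.range etaP) :=
        AffineSubspace.smul_vsub_vadd_mem _ _ h1 h0 h0
      have hv2 : ((v 2 - v 1) / 4) • (etaP (-1) -ᵥ etaP 0) +ᵥ
          (((v 1 + v 2) / 4) • (etaP 1 -ᵥ etaP 0) +ᵥ etaP 0) ∈
          affineSpan ℝ (Set.range etaP) :=
        AffineSubspace.smul_vsub_vadd_mem _ _ h2 h0 hx
      have hveq : v = ((v 2 - v 1) / 4) • (etaP (-1) -ᵥ etaP 0) +ᵥ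
          (((v 1 + v 2) / 4) • (etaP 1 -ᵥ etaP 0) +ᵥ etaP 0) := by
        have hv0 : v 0 = 2 := hv
        ext i
        fin_cases i <;>
          simp [etaP, vsub_eq_sub, vadd_eq_add, PiLp.sub_apply, PiLp.add_apply,
            PiLp.smul_apply, smul_eq_mul, hv0] <;> ring
      rw [hveq]
      exact hv2
  · apply le_antisymm
    · have hmem : etaP 0 ∈ Qplane := etaP_mem 0
      have hd : dist (0 : EuclideanSpace ℝ (Fin 3)) (etaP 0) = 2 := by
        rw [EuclideanSpace.dist_eq]
        have : ∑ i : Fin 3, dist ((0 : EuclideanSpace ℝ (Fin 3)) i) (etaP 0 i) ^ 2 = 4 := by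
          simp [Fin.sum_univ_three, etaP, Real.dist_eq]
          norm_num
        rw [this]
        rw [show (4 : ℝ) = 2 ^ 2 by norm_num, Real.sqrt_sq (by norm_num)]
      calc Metric.infDist 0 Qplane ≤ dist 0 (etaP 0) := Metric.infDist_le_dist_of_mem hmem
        _ = 2 := hd
    · rw [← not_lt, Metric.infDist_lt_iff ⟨etaP 0, etaP_mem 0⟩]
      rintro ⟨y, hy, hlt⟩
      rw [← not_le] at hlt
      apply hlt
      have hy0 : y 0 = 2 := hy
      rw [EuclideanSpace.dist_eq]
      have hle : (4 : ℝ) ≤ ∑ i : Fin 3, dist ((0 : EuclideanSpace ℝ (Fin 3)) i) (y i) ^ 2 := by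
        rw [Fin.sum_univ_three]
        have h4 : dist ((0 : EuclideanSpace ℝ (Fin 3)) 0) (y 0) ^ 2 = 4 := by
          simp [hy0, Real.dist_eq]
          norm_num
        nlinarith [sq_nonneg (dist ((0 : EuclideanSpace ℝ (Fin 3)) 1) (y 1)),
          sq_nonneg (dist ((0 : EuclideanSpace ℝ (Fin 3)) 2) (y 2))]
      calc (2 : ℝ) = Real.sqrt 4 := by
            rw [show (4 : ℝ) = 2 ^ 2 by norm_num, Real.sqrt_sq (by norm_num)]
        _ ≤ _ := Real.sqrt_le_sqrt hle
  · intro h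
    have hmem : (WithLp.toLp 2 (![2, 0, 1] : Fin 3 → ℝ) : EuclideanSpace ℝ (Fin 3)) ∈ Qplane := by
      show (![2, 0, 1] : Fin 3 → ℝ) 0 = 2
      norm_num
    rw [h] at hmem
    have : (![2, 0, 1] : Fin 3 → ℝ) 0 + (![2, 0, 1] : Fin 3 → ℝ) 2 = 2 := hmem
    norm_num [show (![2, 0, 1] : Fin 3 → ℝ) 2 = 1 from rfl] at this
  · intro h
    have h2 : Real.sqrt 2 < 2 := by
      nlinarith [Real.sq_sqrt (by norm_num : (0:ℝ) ≤ 2), Real.sqrt_nonneg 2]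
    rw [← h] at h2
    exact lt_irrefl _ h2
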